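/- For every ζ > 0, A > 0 and c₀ > 0 there exist constants C > 0, C' > 0 and ε₀ > 0 such that the following holds. Let γ ∈ (0, 1/2), λmin ∈ (0, 1], λmax ≥ 1 satisfy (λmax/λmin²) · γ · ln(1/γ) ≤ ε₀, let c ∈ (0, c₀], let v > 0 satisfy v·c = C ln(1/γ)/λmin, and let R₀ ∈ [0, A]. If R̄ : [0,1] → ℝ is differentiable with R̄(0) = R₀ and R̄'(t) = −2 λmin v μ_c(R̄(t)) R̄(t) + λmax v² ν_c(R̄(t)) (R̄(t) + ζ²/2) γ for all t ∈ [0,1], then R̄(1) ≤ C' (λmax/λmin²) γ ln(1/γ). -/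

import Mathlib

open MeasureTheory Real

/-- The error function `erf z = (2/√π) ∫₀^z e^{−t²} dt`. -/
noncomputable def erf (z : ℝ) : ℝ := 2 / Real.sqrt π * ∫ t in (0:ℝ)..z, Real.exp (-t ^ 2)

/-- `F(z) = erf(z/√2) − √(2/π) · z · e^{−z²/2}`. -/
noncomputable def F (z : ℝ) : ℝ :=
  erf (z / Real.sqrt 2) - Real.sqrt (2 / π) * z * Real.exp (-z ^ 2 / 2)

/-- Descent reduction factor `μ_c(R) = erf(c'(R)/√2)` with `c'(R) = c/√(2R+ζ²)`. -/
noncomputable def mu (ζ c R : ℝ) : ℝ := erf (c / Real.sqrt (2 * R + ζ ^ 2) / Real.sqrt 2)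

/-- Variance reduction factor `ν_c(R) = c'(R)²(1 − erf(c'(R)/√2)) + F(c'(R))`. -/
noncomputable def nu (ζ c R : ℝ) : ℝ :=
  (c / Real.sqrt (2 * R + ζ ^ 2)) ^ 2 *
      (1 - erf (c / Real.sqrt (2 * R + ζ ^ 2) / Real.sqrt 2))
    + F (c / Real.sqrt (2 * R + ζ ^ 2))

lemma erf_integrable (a b : ℝ) :
    IntervalIntegrable (fun t : ℝ => Real.exp (-t ^ 2)) volume a b :=
  (Continuous.intervalIntegrable (by continuity) a b)

lemma erf_nonneg' {x : ℝ} (hx : 0 ≤ x) : 0 ≤ erf x := by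
  unfold erf
  apply mul_nonneg (by positivity)
  exact intervalIntegral.integral_nonneg hx fun t _ => (Real.exp_pos _).le

lemma erf_le_one' {x : ℝ} (hx : 0 ≤ x) : erf x ≤ 1 := by
  have hint : ∫ t in (0:ℝ)..x, Real.exp (-t ^ 2) ≤ Real.sqrt π / 2 := by
    rw [intervalIntegral.integral_of_le hx]
    have h1 : ∫ t in Set.Ioc (0:ℝ) x, Real.exp (-t ^ 2) ≤
        ∫ t in Set.Ioi (0:ℝ), Real.exp (-t ^ 2) := by
      apply setIntegral_mono_set
      · have := (integrable_exp_neg_mul_sq (by norm_num : (0:ℝ) < 1)).integrableOn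
          (s := Set.Ioi (0:ℝ))
        simpa using this
      · filter_upwards with t using (Real.exp_pos _).le
      · exact Filter.Eventually.of_forall Set.Ioc_subset_Ioi_self
    have h2 : ∫ t in Set.Ioi (0:ℝ), Real.exp (-t ^ 2) = Real.sqrt π / 2 := by
      have := integral_gaussian_Ioi 1
      simpa using this
    linarith
  unfold erf
  have hπ : 0 < Real.sqrt π := Real.sqrt_pos.2 Real.pi_pos
  calc 2 / Real.sqrt π * ∫ t in (0:ℝ)..x, Real.exp (-t ^ 2)
      ≤ 2 / Real.sqrt π * (Real.sqrt π / 2) := by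
        apply mul_le_mul_of_nonneg_left hint (by positivity)
    _ = 1 := by field_simp

lemma erf_ge {x : ℝ} (hx : 0 ≤ x) :
    2 / Real.sqrt π * (x * Real.exp (-x ^ 2)) ≤ erf x := by
  have hint : x * Real.exp (-x ^ 2) ≤ ∫ t in (0:ℝ)..x, Real.exp (-t ^ 2) := by
    have := intervalIntegral.integral_mono_on hx
      ((continuous_const (y := Real.exp (-x ^ 2))).intervalIntegrable 0 x)
      (erf_integrable 0 x)
      (fun t ht => by
        apply Real.exp_le_exp.2
        have h1 := ht.1; have h2 := ht.2
        nlinarith)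
    simpa using this
  unfold erf
  have hπ : 0 < Real.sqrt π := Real.sqrt_pos.2 Real.pi_pos
  apply mul_le_mul_of_nonneg_left hint (by positivity)

lemma erf_le_lin {x : ℝ} (hx : 0 ≤ x) : erf x ≤ 2 / Real.sqrt π * x := by
  have hint : ∫ t in (0:ℝ)..x, Real.exp (-t ^ 2) ≤ x := by
    have := intervalIntegral.integral_mono_on hx (erf_integrable 0 x)
      ((continuous_const (y := (1:ℝ))).intervalIntegrable 0 x)
      (fun t _ => by
        have : -t ^ 2 ≤ 0 := by nlinarith
        simpa using Real.exp_le_one_iff.2 this)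
    simpa using this
  unfold erf
  have hπ : 0 < Real.sqrt π := Real.sqrt_pos.2 Real.pi_pos
  apply mul_le_mul_of_nonneg_left hint (by positivity)

lemma erf_div_sqrt_two_ge {z : ℝ} (hz : 0 ≤ z) :
    Real.sqrt 2 / Real.sqrt π * z * Real.exp (-z ^ 2 / 2) ≤ erf (z / Real.sqrt 2) := by
  have h2 : (0:ℝ) < Real.sqrt 2 := Real.sqrt_pos.2 (by norm_num)
  have hsq : Real.sqrt 2 * Real.sqrt 2 = 2 := Real.mul_self_sqrt (by norm_num)
  have h := erf_ge (x := z / Real.sqrt 2) (by positivity)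
  have harg : -(z / Real.sqrt 2) ^ 2 = -z ^ 2 / 2 := by
    rw [div_pow]; rw [Real.sq_sqrt (by norm_num : (0:ℝ) ≤ 2)]; ring
  rw [harg] at h
  have heq : 2 / Real.sqrt π * (z / Real.sqrt 2 * Real.exp (-z ^ 2 / 2)) =
      Real.sqrt 2 / Real.sqrt π * z * Real.exp (-z ^ 2 / 2) := by
    have hπ : (0:ℝ) < Real.sqrt π := Real.sqrt_pos.2 Real.pi_pos
    field_simp
    ring_nf
    rw [Real.sq_sqrt (by norm_num : (0:ℝ) ≤ 2)]
  linarith [heq ▸ h]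

lemma erf_div_sqrt_two_le {z : ℝ} (hz : 0 ≤ z) :
    erf (z / Real.sqrt 2) ≤ Real.sqrt 2 / Real.sqrt π * z := by
  have h2 : (0:ℝ) < Real.sqrt 2 := Real.sqrt_pos.2 (by norm_num)
  have hsq : Real.sqrt 2 * Real.sqrt 2 = 2 := Real.mul_self_sqrt (by norm_num)
  have h := erf_le_lin (x := z / Real.sqrt 2) (by positivity)
  have hπ : (0:ℝ) < Real.sqrt π := Real.sqrt_pos.2 Real.pi_pos
  have heq : 2 / Real.sqrt π * (z / Real.sqrt 2) = Real.sqrt 2 / Real.sqrt π * z := by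
    field_simp; ring_nf; rw [Real.sq_sqrt (by norm_num : (0:ℝ) ≤ 2)]
  linarith [heq ▸ h]

lemma sqrt_two_div_pi : Real.sqrt (2 / π) = Real.sqrt 2 / Real.sqrt π :=
  Real.sqrt_div (by norm_num : (0:ℝ) ≤ 2) π

/-- ν(z) ≤ z² for z ≥ 0. -/
lemma nu_aux_le {z : ℝ} (hz : 0 ≤ z) :
    z ^ 2 * (1 - erf (z / Real.sqrt 2)) + F z ≤ z ^ 2 := by
  unfold F
  rw [sqrt_two_div_pi]
  set e := erf (z / Real.sqrt 2) with he
  set s := Real.sqrt 2 / Real.sqrt π with hs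
  have hspos : 0 < s := by
    have hπ : (0:ℝ) < Real.sqrt π := Real.sqrt_pos.2 Real.pi_pos
    have h2 : (0:ℝ) < Real.sqrt 2 := Real.sqrt_pos.2 (by norm_num)
    positivity
  have key : (1 - z ^ 2) * e ≤ s * z * Real.exp (-z ^ 2 / 2) := by
    rcases le_or_gt 1 (z ^ 2) with h | h
    · have h1 : (1 - z ^ 2) * e ≤ 0 :=
        mul_nonpos_of_nonpos_of_nonneg (by linarith) (erf_nonneg' (by positivity))
      have h2 : 0 ≤ s * z * Real.exp (-z ^ 2 / 2) := by positivity
      linarith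
    · have h1 : e ≤ s * z := erf_div_sqrt_two_le hz
      have h2 : 1 - z ^ 2 ≤ Real.exp (-z ^ 2 / 2) := by
        have := Real.add_one_le_exp (-z ^ 2 / 2)
        nlinarith [sq_nonneg z]
      have h3 : (1 - z ^ 2) * e ≤ (1 - z ^ 2) * (s * z) :=
        mul_le_mul_of_nonneg_left h1 (by linarith)
      have h4 : (1 - z ^ 2) * (s * z) ≤ Real.exp (-z ^ 2 / 2) * (s * z) :=
        mul_le_mul_of_nonneg_right h2 (by positivity)
      nlinarith
  nlinarith

set_option maxHeartbeats 1600000 in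
/-- Final-risk upper bound for the deterministic equivalent of output-perturbation DP-GD
(constant learning rate schedule) with the optimal hyper-parameter choice
`v·c = C ln(1/γ)/λmin`: the final risk is `O((λmax/λmin²) γ ln(1/γ))`. -/
theorem output_perturbation_ode_upper_bound (ζ A c₀ : ℝ) (hζ : 0 < ζ) (hA : 0 < A)
    (hc₀ : 0 < c₀) :
    ∃ C C' ε₀ : ℝ, 0 < C ∧ 0 < C' ∧ 0 < ε₀ ∧
      ∀ γ lmin lmax c v R₀ : ℝ,
        0 < γ → γ < 1 / 2 → 0 < lmin → lmin ≤ 1 → 1 ≤ lmax →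
        lmax / lmin ^ 2 * γ * Real.log (1 / γ) ≤ ε₀ →
        0 < c → c ≤ c₀ → 0 < v → v * c = C * Real.log (1 / γ) / lmin →
        0 ≤ R₀ → R₀ ≤ A →
        ∀ R : ℝ → ℝ, R 0 = R₀ →
          (∀ t ∈ Set.Icc (0:ℝ) 1,
            HasDerivAt R
              (-2 * lmin * v * mu ζ c (R t) * R t
                + lmax * v ^ 2 * nu ζ c (R t) * (R t + ζ ^ 2 / 2) * γ) t) →
          R 1 ≤ C' * (lmax / lmin ^ 2) * γ * Real.log (1 / γ) := by
  have hπ : (0:ℝ) < Real.sqrt π := Real.sqrt_pos.2 Real.pi_pos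
  have h2s : (0:ℝ) < Real.sqrt 2 := Real.sqrt_pos.2 (by norm_num)
  set M : ℝ := c₀ / ζ with hM
  set κ : ℝ := Real.sqrt 2 / Real.sqrt π * Real.exp (-M ^ 2 / 2) with hκdef
  have hκ : 0 < κ := by positivity
  set B : ℝ := A + 1 with hBd
  have hBpos : 0 < B := by rw [hBd]; linarith
  set sB : ℝ := Real.sqrt (2 * B + ζ ^ 2) with hsBdef
  have hsB : 0 < sB := Real.sqrt_pos.2 (by positivity)
  set C : ℝ := sB / κ with hCdef
  have hC : 0 < C := by positivity
  have hlog2 : 0 < Real.log 2 := Real.log_pos (by norm_num)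
  refine ⟨C, A / Real.log 2 + C ^ 2, 2 / C ^ 2, hC, by positivity, by positivity, ?_⟩
  intro γ lmin lmax c v R₀ hγ hγ2 hlmin hlmin1 hlmax hEε hc hcc₀ hv hvc hR₀ hR₀A R hR0 hRd
  have hlmax0 : (0:ℝ) < lmax := by linarith
  set L : ℝ := Real.log (1 / γ) with hLdef
  have hL2 : Real.log 2 ≤ L := Real.log_le_log (by norm_num)
    (by rw [le_div_iff₀ hγ]; linarith)
  have hL : 0 < L := lt_of_lt_of_le hlog2 hL2
  set E : ℝ := lmax / lmin ^ 2 * γ * L with hEdef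
  have hlm2 : 0 < lmin ^ 2 := by positivity
  have h1E : 1 ≤ lmax / lmin ^ 2 := by
    rw [le_div_iff₀ hlm2]
    nlinarith only [hlmax, hlmin, hlmin1, mul_le_mul_of_nonneg_left hlmin1 hlmin.le]
  have hEpos : 0 < E := by
    rw [hEdef]; positivity
  set ρ : ℝ := C ^ 2 / 2 * E with hρdef
  have hρpos : 0 < ρ := by rw [hρdef]; positivity
  have hρ1 : ρ ≤ 1 := by
    have h1 : C ^ 2 / 2 * E ≤ C ^ 2 / 2 * (2 / C ^ 2) :=
      mul_le_mul_of_nonneg_left hEε (by positivity)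
    have h2 : C ^ 2 / 2 * (2 / C ^ 2) = 1 := by field_simp
    rw [hρdef]; linarith
  set N : ℝ := ρ * L with hNdef
  have hN : 0 < N := by rw [hNdef]; positivity
  set y : ℝ → ℝ := fun t => (R₀ - ρ) * Real.exp (-(2 * L) * t) + ρ with hydef
  set y' : ℝ → ℝ := fun t => (R₀ - ρ) * (Real.exp (-(2 * L) * t) * -(2 * L)) with hy'def
  have hy : ∀ t, HasDerivAt y (y' t) t := by
    intro t
    have h1 : HasDerivAt (fun u : ℝ => -(2 * L) * u) (-(2 * L)) t := by
      simpa using (hasDerivAt_id t).const_mul (-(2 * L))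
    exact (h1.exp.const_mul (R₀ - ρ)).add_const ρ
  have key : ∀ x ∈ Set.Icc (0:ℝ) 1, R x ≤ y x := by
    intro x hx
    refine image_le_of_deriv_right_lt_deriv_boundary
      (f := R)
      (f' := fun t => -2 * lmin * v * mu ζ c (R t) * R t
        + lmax * v ^ 2 * nu ζ c (R t) * (R t + ζ ^ 2 / 2) * γ)
      (a := 0) (b := 1) (B := y) (B' := y') ?_ ?_ ?_ hy ?_ hx
    · exact fun t ht => (hRd t ht).continuousAt.continuousWithinAt
    · exact fun t ht =>
        (hRd t (Set.mem_Icc.2 ⟨ht.1, ht.2.le⟩)).hasDerivWithinAt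
    · have hy0 : y 0 = R₀ := by rw [hydef]; norm_num
      rw [hR0, hy0]
    · intro x hx hcontact
      have hx0 : 0 ≤ x := hx.1
      have hexle : Real.exp (-(2 * L) * x) ≤ 1 :=
        Real.exp_le_one_iff.2 (by nlinarith only [mul_nonneg hL.le hx0])
      have hexpos : 0 < Real.exp (-(2 * L) * x) := Real.exp_pos _
      set e : ℝ := Real.exp (-(2 * L) * x) with hedef
      have hyx : y x = (R₀ - ρ) * e + ρ := rfl
      have hcr : R x = (R₀ - ρ) * e + ρ := by rw [hcontact, hyx]
      have hr0 : 0 ≤ R x := by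
        rw [hcr]
        nlinarith only [mul_nonneg hR₀ hexpos.le,
          mul_nonneg hρpos.le (sub_nonneg.2 hexle)]
      have hrB : R x ≤ B := by
        rw [hcr, hBd]
        nlinarith only [mul_le_of_le_one_right hR₀ hexle, hR₀A, hρ1,
          mul_nonneg hρpos.le hexpos.le]
      set r : ℝ := R x with hrdef
      have harg : 0 < 2 * r + ζ ^ 2 := by nlinarith only [pow_pos hζ 2, hr0]
      set s : ℝ := Real.sqrt (2 * r + ζ ^ 2) with hsdef
      have hs0 : 0 < s := Real.sqrt_pos.2 harg
      have hsζ : ζ ≤ s := by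
        have h1 := Real.sqrt_le_sqrt (show ζ ^ 2 ≤ 2 * r + ζ ^ 2 by linarith)
        rwa [Real.sqrt_sq hζ.le] at h1
      have hssB : s ≤ sB := by
        rw [hsdef, hsBdef]
        apply Real.sqrt_le_sqrt
        nlinarith only [hrB]
      set z : ℝ := c / s with hzdef
      have hz0 : 0 < z := by rw [hzdef]; positivity
      have hzM : z ≤ M := div_le_div₀ hc₀.le hcc₀ hζ hsζ
      have hmu_eq : mu ζ c r = erf (z / Real.sqrt 2) := rfl
      have hmu1 : κ * z ≤ mu ζ c r := by
        rw [hmu_eq]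
        have h1 := erf_div_sqrt_two_ge hz0.le
        have h2 : Real.exp (-M ^ 2 / 2) ≤ Real.exp (-z ^ 2 / 2) :=
          Real.exp_le_exp.2 (by nlinarith only [hzM, hz0, sq_nonneg (M - z)])
        calc κ * z = Real.sqrt 2 / Real.sqrt π * z * Real.exp (-M ^ 2 / 2) := by
              rw [hκdef]; ring
          _ ≤ Real.sqrt 2 / Real.sqrt π * z * Real.exp (-z ^ 2 / 2) := by
              apply mul_le_mul_of_nonneg_left h2 (by positivity)
          _ ≤ erf (z / Real.sqrt 2) := h1
      have hlvc : lmin * (v * c) = C * L := by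
        rw [hvc]; field_simp
      have hmuL : L ≤ lmin * v * mu ζ c r := by
        have hstep1 : lmin * v * (κ * z) ≤ lmin * v * mu ζ c r :=
          mul_le_mul_of_nonneg_left hmu1 (by positivity)
        have hstep2 : lmin * v * (κ * z) = κ * (C * L) / s := by
          rw [hzdef, ← hlvc]; field_simp
        have hstep3 : κ * (C * L) / sB ≤ κ * (C * L) / s := by
          apply div_le_div_of_nonneg_left (by positivity) hs0 hssB
        have hstep4 : κ * (C * L) / sB = L := by
          rw [hCdef]; field_simp
        calc L = κ * (C * L) / sB := hstep4.symm
          _ ≤ κ * (C * L) / s := hstep3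
          _ = lmin * v * (κ * z) := hstep2.symm
          _ ≤ lmin * v * mu ζ c r := hstep1
      have hnu_eq : nu ζ c r = z ^ 2 * (1 - erf (z / Real.sqrt 2)) + F z := rfl
      have hnu : nu ζ c r ≤ z ^ 2 := by
        rw [hnu_eq]; exact nu_aux_le hz0.le
      have hnoise : lmax * v ^ 2 * nu ζ c r * (r + ζ ^ 2 / 2) * γ ≤ N := by
        have hmul : 0 ≤ lmax * v ^ 2 * (r + ζ ^ 2 / 2) * γ := by positivity
        have h1 : lmax * v ^ 2 * nu ζ c r * (r + ζ ^ 2 / 2) * γ ≤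
            lmax * v ^ 2 * z ^ 2 * (r + ζ ^ 2 / 2) * γ := by
          nlinarith only [mul_le_mul_of_nonneg_right hnu hmul]
        have hs2 : s ^ 2 = 2 * r + ζ ^ 2 := Real.sq_sqrt harg.le
        have hvc2 : v ^ 2 * c ^ 2 = C ^ 2 * L ^ 2 / lmin ^ 2 := by
          have h := congrArg (fun t => t ^ 2) hvc
          simp only [mul_pow, div_pow] at h
          rw [h]
        have hhalf : (r + ζ ^ 2 / 2) / (2 * r + ζ ^ 2) = 1 / 2 := by
          rw [div_eq_div_iff (ne_of_gt harg) (by norm_num)]; ring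
        have h2 : lmax * v ^ 2 * z ^ 2 * (r + ζ ^ 2 / 2) * γ = N := by
          calc lmax * v ^ 2 * z ^ 2 * (r + ζ ^ 2 / 2) * γ
              = lmax * (v ^ 2 * c ^ 2) * ((r + ζ ^ 2 / 2) / (2 * r + ζ ^ 2)) * γ := by
                rw [hzdef, div_pow, hs2]; ring
            _ = lmax * (C ^ 2 * L ^ 2 / lmin ^ 2) * (1 / 2) * γ := by
                rw [hvc2, hhalf]
            _ = N := by
                rw [hNdef, hρdef, hEdef]; field_simp
        linarith only [h1, h2]
      have hdescent : -2 * lmin * v * mu ζ c r * r ≤ -2 * L * r := by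
        have h := mul_le_mul_of_nonneg_right hmuL hr0
        nlinarith only [h]
      have hyx' : y' x = -2 * L * r + 2 * N := by
        have h1 : y' x = (R₀ - ρ) * (e * -(2 * L)) := rfl
        rw [h1, hNdef]
        linear_combination (2 * L) * hcr
      show -2 * lmin * v * mu ζ c (R x) * R x
          + lmax * v ^ 2 * nu ζ c (R x) * (R x + ζ ^ 2 / 2) * γ < y' x
      rw [hyx']
      have : -2 * lmin * v * mu ζ c r * r
          + lmax * v ^ 2 * nu ζ c r * (r + ζ ^ 2 / 2) * γ ≤ -2 * L * r + N := by
        linarith only [hdescent, hnoise]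
      linarith only [this, hN]
  have hfinal : R 1 ≤ y 1 := key 1 (Set.mem_Icc.2 ⟨by norm_num, le_refl 1⟩)
  have hexp1 : Real.exp (-(2 * L) * 1) = γ ^ 2 := by
    rw [hLdef, one_div, Real.log_inv, mul_one]
    rw [show -(2 * -Real.log γ) = Real.log γ + Real.log γ by ring]
    rw [Real.exp_add, Real.exp_log hγ]; ring
  have hy1 : y 1 = (R₀ - ρ) * γ ^ 2 + ρ := by
    rw [hydef]; simp only; rw [hexp1]
  rw [hy1] at hfinal
  have hb1 : R 1 ≤ A * γ ^ 2 + ρ := by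
    have h := mul_le_mul_of_nonneg_right (show R₀ - ρ ≤ A by linarith only [hR₀A, hρpos]) (sq_nonneg γ)
    linarith only [hfinal, h]
  have hb2 : A * γ ^ 2 ≤ A / Real.log 2 * E := by
    have hγ1 : γ ≤ 1 := by linarith
    have hγE : γ * Real.log 2 ≤ E := by
      rw [hEdef]
      have ha : γ * Real.log 2 ≤ γ * L := mul_le_mul_of_nonneg_left hL2 hγ.le
      have hb : γ * L ≤ lmax / lmin ^ 2 * (γ * L) :=
        le_mul_of_one_le_left (mul_nonneg hγ.le hL.le) h1E
      nlinarith only [ha, hb]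
    have h3 : A * γ ^ 2 ≤ A * γ := by
      nlinarith only [mul_nonneg (mul_nonneg hA.le hγ.le) (sub_nonneg.2 hγ1)]
    have h4 : A * γ ≤ A * (E / Real.log 2) := by
      apply mul_le_mul_of_nonneg_left _ hA.le
      rw [le_div_iff₀ hlog2]; linarith
    have h5 : A * (E / Real.log 2) = A / Real.log 2 * E := by ring
    linarith
  have hb3 : ρ ≤ C ^ 2 * E := by
    rw [hρdef]; nlinarith only [mul_nonneg (sq_nonneg C) hEpos.le]
  have heq : (A / Real.log 2 + C ^ 2) * (lmax / lmin ^ 2) * γ * L =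
      A / Real.log 2 * E + C ^ 2 * E := by
    rw [hEdef]; ring
  rw [heq]
  linarith
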